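/- arXiv:2001.08426 — 5 statements merged into one kernel-verified Lean document; each statement's English description precedes it below -/
import Mathlib

section
/- Let A_C(Λ) be a code algebra, α ∈ C*, and suppose a_α := a_{i,α} and c_α := c_{i,α} are independent of i ∈ supp(α), with a_α|α| invertible in F. Set λ = 1/(2a_α|α|), and let μ ∈ F satisfy μ² = (λ − λ²)/c_α. Then both e_{α,+} = λt_α + μe^α and e_{α,−} = λt_α − μe^α are idempotents of A_C(Λ), where t_α = Σ_{i∈supp(α)} tᵢ. -/
open Finset in
/-- The code algebra `A_C(Λ)` of a binary linear code `C`, presented as a commutative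
nonassociative `F`-algebra `A` with a distinguished basis of toral elements `t i` and
codeword elements `e α` (for `α ∈ C* = C \ {0, 1}`), structure parameters
`pa i α = a_{i,α}`, `pb α β = b_{α,β}`, `pc i α = c_{i,α}`, and the defining
multiplication rules. -/
structure CodeAlgebra (F : Type*) [Field F] (ι : Type*) [Fintype ι] [DecidableEq ι]
    (C : Submodule (ZMod 2) (ι → ZMod 2))
    (A : Type*) [NonUnitalNonAssocCommRing A] [Module F A] where
  t : ι → A
  e : (ι → ZMod 2) → A
  pa : ι → (ι → ZMod 2) → F
  pb : (ι → ZMod 2) → (ι → ZMod 2) → F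
  pc : ι → (ι → ZMod 2) → F
  indep : LinearIndependent F
    (Sum.elim t (fun β : {β : ι → ZMod 2 // β ∈ C ∧ β ≠ 0 ∧ β ≠ 1} => e β.1))
  span_top : Submodule.span F
    (Set.range t ∪ e '' {β | β ∈ C ∧ β ≠ 0 ∧ β ≠ 1}) = ⊤
  mul_tt : ∀ i j, t i * t j = if i = j then t i else 0
  mul_te : ∀ i α, α ∈ C → α ≠ 0 → α ≠ 1 →
    t i * e α = if α i = 1 then pa i α • e α else 0
  mul_ee : ∀ α β, α ∈ C → β ∈ C → α ≠ 0 → α ≠ 1 → β ≠ 0 → β ≠ 1 →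
    β ≠ α → α + β ≠ 1 → e α * e β = pb α β • e (α + β)
  mul_ee_self : ∀ α, α ∈ C → α ≠ 0 → α ≠ 1 →
    e α * e α = ∑ i ∈ univ.filter (fun i => α i = 1), pc i α • t i
  mul_ee_compl : ∀ α β, α ∈ C → β ∈ C → α ≠ 0 → α ≠ 1 → β ≠ 0 → β ≠ 1 →
    α + β = 1 → e α * e β = 0

open Finset in
/-- The small idempotents `e_{α,±} = λ t_α ± μ e^α` are idempotents of the code
algebra, where `λ = 1/(2 a_α |α|)` and `μ² = (λ − λ²)/c_α`. -/
theorem small_idempotents_are_idempotent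
    (F : Type*) [Field F] (hch : (2 : F) ≠ 0)
    (ι : Type*) [Fintype ι] [DecidableEq ι]
    (C : Submodule (ZMod 2) (ι → ZMod 2))
    (A : Type*) [NonUnitalNonAssocCommRing A] [Module F A]
    [SMulCommClass F A A] [IsScalarTower F A A]
    (CA : CodeAlgebra F ι C A)
    (α : ι → ZMod 2) (hαC : α ∈ C) (hα0 : α ≠ 0) (hα1 : α ≠ 1)
    (a0 c0 lam mu : F)
    (ha : ∀ i, α i = 1 → CA.pa i α = a0)
    (hc : ∀ i, α i = 1 → CA.pc i α = c0)
    (hc0 : c0 ≠ 0)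
    (haw : a0 * ((univ.filter fun i => α i = 1).card : F) ≠ 0)
    (hlam : lam = (2 * a0 * ((univ.filter fun i => α i = 1).card : F))⁻¹)
    (hmu : mu ^ 2 = (lam - lam ^ 2) / c0) :
    (lam • (∑ i ∈ univ.filter fun i => α i = 1, CA.t i) + mu • CA.e α) *
      (lam • (∑ i ∈ univ.filter fun i => α i = 1, CA.t i) + mu • CA.e α) =
      lam • (∑ i ∈ univ.filter fun i => α i = 1, CA.t i) + mu • CA.e α ∧
    (lam • (∑ i ∈ univ.filter fun i => α i = 1, CA.t i) - mu • CA.e α) *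
      (lam • (∑ i ∈ univ.filter fun i => α i = 1, CA.t i) - mu • CA.e α) =
      lam • (∑ i ∈ univ.filter fun i => α i = 1, CA.t i) - mu • CA.e α := by
  set n : F := ((univ.filter fun i => α i = 1).card : F) with hn
  set T : A := ∑ i ∈ univ.filter fun i => α i = 1, CA.t i with hT
  set E : A := CA.e α with hE
  have hTT : T * T = T := by
    have hrow : ∀ i ∈ univ.filter fun i => α i = 1,
        (∑ j ∈ univ.filter fun i => α i = 1, CA.t i * CA.t j) = CA.t i := by
      intro i hi
      simp only [CA.mul_tt]
      rw [Finset.sum_ite_eq]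
      exact if_pos hi
    rw [hT, Finset.sum_mul_sum, Finset.sum_congr rfl hrow]
  have hTE : T * E = (n * a0) • E := by
    rw [hT, Finset.sum_mul]
    rw [Finset.sum_congr rfl (fun i hi => ?_), Finset.sum_const,
      ← Nat.cast_smul_eq_nsmul F, smul_smul, hn]
    · rw [CA.mul_te i α hαC hα0 hα1]
      have hi1 : α i = 1 := by simpa using (Finset.mem_filter.mp hi).2
      rw [if_pos hi1, ha i hi1]
  have hEE : E * E = c0 • T := by
    rw [hE, CA.mul_ee_self α hαC hα0 hα1, hT, Finset.smul_sum]
    refine Finset.sum_congr rfl (fun i hi => ?_)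
    have hi1 : α i = 1 := by simpa using (Finset.mem_filter.mp hi).2
    rw [hc i hi1]
  have h2an : 2 * a0 * n ≠ 0 := by
    rw [mul_assoc]; exact mul_ne_zero hch haw
  have hlam1 : 2 * a0 * n * lam = 1 := by
    rw [hlam, mul_inv_cancel₀ h2an]
  have key : ∀ m : F, m ^ 2 = (lam - lam ^ 2) / c0 →
      (lam • T + m • E) * (lam • T + m • E) = lam • T + m • E := by
    intro m hm
    have hmc : m ^ 2 * c0 = lam - lam ^ 2 := by
      rw [hm, div_mul_cancel₀ _ hc0]
    have hET : E * T = (n * a0) • E := by rw [mul_comm, hTE]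
    rw [add_mul, mul_add, mul_add, smul_mul_smul_comm, smul_mul_smul_comm,
      smul_mul_smul_comm, smul_mul_smul_comm, hTT, hTE, hET, hEE]
    match_scalars
    · linear_combination hmc
    · linear_combination m * hlam1
  refine ⟨key mu hmu, ?_⟩
  have := key (-mu) (by rw [neg_pow, hmu]; ring_nf)
  simpa [sub_eq_add_neg, neg_smul] using this
end

section
/- With notation as above (λ = 1/(2a_α|α|), μ² = (λ−λ²)/c_α), the product of the two small idempotents satisfies (λt_α + μe^α)(λt_α − μe^α) = λ(2λ − 1)t_α. In particular the two small idempotents e_{α,±} are orthogonal if and only if λ = 1/2 (equivalently a_α = 1/(2|α|)) or λ = 0. -/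
open Finset in
/-- The product of the two small idempotents: `e_{α,+} e_{α,−} = λ(2λ−1) t_α`; in
particular they are orthogonal iff `λ = 1/2` or `λ = 0`. -/
theorem small_idempotents_product
    (F : Type*) [Field F] (hch : (2 : F) ≠ 0)
    (ι : Type*) [Fintype ι] [DecidableEq ι]
    (C : Submodule (ZMod 2) (ι → ZMod 2))
    (A : Type*) [NonUnitalNonAssocCommRing A] [Module F A]
    [SMulCommClass F A A] [IsScalarTower F A A]
    (CA : CodeAlgebra F ι C A)
    (α : ι → ZMod 2) (hαC : α ∈ C) (hα0 : α ≠ 0) (hα1 : α ≠ 1)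
    (a0 c0 lam mu : F)
    (ha : ∀ i, α i = 1 → CA.pa i α = a0)
    (hc : ∀ i, α i = 1 → CA.pc i α = c0)
    (hc0 : c0 ≠ 0)
    (haw : a0 * ((univ.filter fun i => α i = 1).card : F) ≠ 0)
    (hlam : lam = (2 * a0 * ((univ.filter fun i => α i = 1).card : F))⁻¹)
    (hmu : mu ^ 2 = (lam - lam ^ 2) / c0) :
    (lam • (∑ i ∈ univ.filter fun i => α i = 1, CA.t i) + mu • CA.e α) *
      (lam • (∑ i ∈ univ.filter fun i => α i = 1, CA.t i) - mu • CA.e α) =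
      (lam * (2 * lam - 1)) • (∑ i ∈ univ.filter fun i => α i = 1, CA.t i) ∧
    ((lam • (∑ i ∈ univ.filter fun i => α i = 1, CA.t i) + mu • CA.e α) *
      (lam • (∑ i ∈ univ.filter fun i => α i = 1, CA.t i) - mu • CA.e α) = 0 ↔
      lam = 1 / 2 ∨ lam = 0) := by
  classical
  set s := univ.filter fun i => α i = 1 with hs
  set T := ∑ i ∈ s, CA.t i with hT
  have hTT : T * T = T := by
    rw [hT, Finset.sum_mul_sum]
    calc ∑ i ∈ s, ∑ j ∈ s, CA.t i * CA.t j
        = ∑ i ∈ s, ∑ j ∈ s, (if i = j then CA.t i else 0) :=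
          Finset.sum_congr rfl fun i _ => Finset.sum_congr rfl fun j _ => CA.mul_tt i j
      _ = ∑ i ∈ s, CA.t i := Finset.sum_congr rfl fun i hi => by
          rw [Finset.sum_ite_eq]; simp [hi]
  have hee : CA.e α * CA.e α = c0 • T := by
    rw [CA.mul_ee_self α hαC hα0 hα1, hT, Finset.smul_sum]
    exact Finset.sum_congr rfl fun i hi => by
      rw [hc i (by simpa [hs] using hi)]
  have hmu' : mu * mu = (lam - lam ^ 2) / c0 := by rw [← hmu]; ring
  have key : (lam • T + mu • CA.e α) * (lam • T - mu • CA.e α)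
      = (lam * (2 * lam - 1)) • T := by
    have expand : (lam • T + mu • CA.e α) * (lam • T - mu • CA.e α)
        = lam • T * (lam • T) - mu • CA.e α * (mu • CA.e α) := by
      rw [add_mul, mul_sub, mul_sub]
      rw [mul_comm (mu • CA.e α) (lam • T)]
      abel
    rw [expand, smul_mul_smul_comm, smul_mul_smul_comm, hTT, hee, smul_smul, hmu',
      div_mul_cancel₀ _ hc0, ← sub_smul]
    congr 1
    ring
  refine ⟨key, ?_⟩
  rw [key]
  have hlam0 : lam ≠ 0 := by
    rw [hlam]
    apply inv_ne_zero
    rw [mul_assoc]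
    exact mul_ne_zero hch haw
  have hsne : s.Nonempty := by
    obtain ⟨i, hi⟩ := Function.ne_iff.mp hα0
    refine ⟨i, ?_⟩
    simp only [hs, Finset.mem_filter, Finset.mem_univ, true_and]
    simp only [Pi.zero_apply] at hi
    have h2 : ∀ x : ZMod 2, x ≠ 0 → x = 1 := by decide
    exact h2 _ hi
  constructor
  · intro h0
    have hind : LinearIndependent F CA.t := CA.indep.comp Sum.inl Sum.inl_injective
    have hz : (lam * (2 * lam - 1)) = 0 := by
      obtain ⟨i, hi⟩ := hsne
      exact linearIndependent_iff'.mp hind s (fun _ => lam * (2 * lam - 1))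
        (by rwa [← Finset.smul_sum, ← hT]) i hi
    rcases mul_eq_zero.mp hz with h | h
    · exact absurd h hlam0
    · left
      rw [eq_div_iff hch]
      linear_combination h
  · rintro (h | h)
    · rw [h]
      have h2 : (2 : F) * (1 / 2) = 1 := by rw [one_div, mul_inv_cancel₀ hch]
      have hz : (1 / 2 : F) * (2 * (1 / 2) - 1) = 0 := by rw [h2]; ring
      rw [hz, zero_smul]
    · exact absurd h hlam0
end

section
/- Let A_C(Λ) be a non-degenerate code algebra, α, β ∈ C* with β ≠ α, αᶜ, and suppose a := a_{i,γ} is independent of i and γ. Let e_α = λt_α + μ_αe^α and e_β = λt_β + μ_βe^β be small idempotents with μ_α, μ_β ≠ 0. Then e_α·e_β = λ²t_{α∩β} + λa|α∩β|(μ_αe^α + μ_βe^β) + μ_αμ_βb_{α,β}e^{α+β}, where t_{α∩β} = Σ_{i∈supp(α)∩supp(β)} tᵢ. In particular, since b_{α,β} ≠ 0, the subalgebra generated by e_α and e_β has dimension strictly greater than 2. -/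
set_option maxHeartbeats 2000000 in
open Finset in
/-- The product of small idempotents attached to distinct non-complementary codewords
`α, β`: `e_α e_β = λ² t_{α∩β} + λa|α∩β|(μ_α e^α + μ_β e^β) + μ_α μ_β b_{α,β} e^{α+β}`;
in particular the subalgebra generated by `e_α` and `e_β` has dimension `> 2`. -/
theorem small_idempotents_distinct_product
    (F : Type*) [Field F] (hch : (2 : F) ≠ 0)
    (ι : Type*) [Fintype ι] [DecidableEq ι]
    (C : Submodule (ZMod 2) (ι → ZMod 2))
    (A : Type*) [NonUnitalNonAssocCommRing A] [Module F A]
    [SMulCommClass F A A] [IsScalarTower F A A]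
    (CA : CodeAlgebra F ι C A)
    (α β : ι → ZMod 2) (hαC : α ∈ C) (hα0 : α ≠ 0) (hα1 : α ≠ 1)
    (hβC : β ∈ C) (hβ0 : β ≠ 0) (hβ1 : β ≠ 1)
    (hne : β ≠ α) (hnc : α + β ≠ 1)
    (a0 lam mua mub : F)
    (ha : ∀ i γ, γ ∈ C → γ ≠ 0 → γ ≠ 1 → γ i = 1 → CA.pa i γ = a0)
    (hwt : (univ.filter fun i => α i = 1).card = (univ.filter fun i => β i = 1).card)
    (hlam : lam = (2 * a0 * ((univ.filter fun i => α i = 1).card : F))⁻¹)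
    (hb : CA.pb α β ≠ 0) (hmua : mua ≠ 0) (hmub : mub ≠ 0) :
    (lam • (∑ i ∈ univ.filter fun i => α i = 1, CA.t i) + mua • CA.e α) *
      (lam • (∑ i ∈ univ.filter fun i => β i = 1, CA.t i) + mub • CA.e β) =
      (lam ^ 2) • (∑ i ∈ univ.filter fun i => α i = 1 ∧ β i = 1, CA.t i) +
      (lam * a0 * ((univ.filter fun i => α i = 1 ∧ β i = 1).card : F)) •
        (mua • CA.e α + mub • CA.e β) +
      (mua * mub * CA.pb α β) • CA.e (α + β) ∧
    2 < Module.rank F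
      (NonUnitalAlgebra.adjoin F
        ({lam • (∑ i ∈ univ.filter fun i => α i = 1, CA.t i) + mua • CA.e α,
          lam • (∑ i ∈ univ.filter fun i => β i = 1, CA.t i) + mub • CA.e β} : Set A)) := by
  classical
  -- abbreviations
  set x : A := lam • (∑ i ∈ univ.filter fun i => α i = 1, CA.t i) + mua • CA.e α with hxdef
  set y : A := lam • (∑ i ∈ univ.filter fun i => β i = 1, CA.t i) + mub • CA.e β with hydef
  set k : F := ((univ.filter fun i => α i = 1 ∧ β i = 1).card : F) with hkdef
  -- basic facts about the codewords
  have habC : α + β ∈ C := add_mem hαC hβC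
  have hab0 : α + β ≠ 0 := by
    intro h
    apply hne
    funext i
    have hi := congrFun h i
    have : α i = -(β i) := eq_neg_of_add_eq_zero_left hi
    rw [ZMod.neg_eq_self_mod_two] at this
    exact this.symm
  have habα : α + β ≠ α := fun h => hβ0 (add_eq_left.mp h)
  have habβ : α + β ≠ β := fun h => hα0 (add_eq_right.mp h)
  -- specialized multiplication facts
  have hte1 : ∀ i, α i = 1 → CA.t i * CA.e α = a0 • CA.e α := fun i hi => by
    rw [CA.mul_te i α hαC hα0 hα1, if_pos hi, ha i α hαC hα0 hα1 hi]
  have hte1' : ∀ i, ¬ α i = 1 → CA.t i * CA.e α = 0 := fun i hi => by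
    rw [CA.mul_te i α hαC hα0 hα1, if_neg hi]
  have hte2 : ∀ i, β i = 1 → CA.t i * CA.e β = a0 • CA.e β := fun i hi => by
    rw [CA.mul_te i β hβC hβ0 hβ1, if_pos hi, ha i β hβC hβ0 hβ1 hi]
  have hte2' : ∀ i, ¬ β i = 1 → CA.t i * CA.e β = 0 := fun i hi => by
    rw [CA.mul_te i β hβC hβ0 hβ1, if_neg hi]
  have hee : CA.e α * CA.e β = CA.pb α β • CA.e (α + β) :=
    CA.mul_ee α β hαC hβC hα0 hα1 hβ0 hβ1 hne hnc
  -- the product formula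
  have htt : (∑ i ∈ univ.filter fun i => α i = 1, CA.t i) *
      (∑ j ∈ univ.filter fun j => β j = 1, CA.t j) =
      ∑ i ∈ univ.filter fun i => α i = 1 ∧ β i = 1, CA.t i := by
    rw [sum_mul_sum]
    simp_rw [CA.mul_tt]
    simp only [sum_ite_eq, mem_filter, mem_univ, true_and]
    rw [← sum_filter, filter_filter]
  have hte : (∑ i ∈ univ.filter fun i => α i = 1, CA.t i) * CA.e β =
      (a0 * k) • CA.e β := by
    rw [sum_mul]
    have h : ∀ i ∈ univ.filter fun i => α i = 1,
        CA.t i * CA.e β = if β i = 1 then a0 • CA.e β else 0 := by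
      intro i _
      split
      · exact hte2 i ‹_›
      · exact hte2' i ‹_›
    rw [sum_congr rfl h, ← sum_filter, filter_filter, sum_const,
      ← Nat.cast_smul_eq_nsmul F, smul_smul, mul_comm]
  have het : CA.e α * (∑ i ∈ univ.filter fun i => β i = 1, CA.t i) =
      (a0 * k) • CA.e α := by
    rw [mul_sum]
    have h : ∀ i ∈ univ.filter fun i => β i = 1,
        CA.e α * CA.t i = if α i = 1 then a0 • CA.e α else 0 := by
      intro i _
      rw [mul_comm]
      split
      · exact hte1 i ‹_›
      · exact hte1' i ‹_›
    rw [sum_congr rfl h, ← sum_filter, filter_filter, sum_const,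
      ← Nat.cast_smul_eq_nsmul F, smul_smul, mul_comm]
    have hc : (univ.filter fun i => β i = 1 ∧ α i = 1).card
        = (univ.filter fun i => α i = 1 ∧ β i = 1).card := by
      congr 1
      ext i
      simp [and_comm]
    rw [hkdef, ← hc]
  have key : x * y =
      (lam ^ 2) • (∑ i ∈ univ.filter fun i => α i = 1 ∧ β i = 1, CA.t i) +
      (lam * a0 * k) • (mua • CA.e α + mub • CA.e β) +
      (mua * mub * CA.pb α β) • CA.e (α + β) := by
    rw [hxdef, hydef, add_mul, mul_add, mul_add, smul_mul_assoc, smul_mul_assoc,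
      smul_mul_assoc, smul_mul_assoc, mul_smul_comm, mul_smul_comm, mul_smul_comm,
      mul_smul_comm, htt, hte, het, hee]
    module
  refine ⟨key, ?_⟩
  -- part 2 : the rank bound
  set S := NonUnitalAlgebra.adjoin F ({x, y} : Set A) with hSdef
  have hxS : x ∈ S := NonUnitalAlgebra.subset_adjoin F (Set.mem_insert _ _)
  have hyS : y ∈ S := NonUnitalAlgebra.subset_adjoin F (Set.mem_insert_of_mem _ rfl)
  have hxyS : x * y ∈ S := mul_mem hxS hyS
  -- independence of the relevant basis elements
  have hg3 : Function.Injective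
      (![(⟨α, hαC, hα0, hα1⟩ : {γ : ι → ZMod 2 // γ ∈ C ∧ γ ≠ 0 ∧ γ ≠ 1}),
         ⟨β, hβC, hβ0, hβ1⟩, ⟨α + β, habC, hab0, hnc⟩]) := by
    have hαβ : α ≠ β := fun h => hne h.symm
    intro j l h
    fin_cases j <;> fin_cases l <;> simp_all
  have hv' : LinearIndependent F
      (Sum.elim CA.t ![CA.e α, CA.e β, CA.e (α + β)]) := by
    have hcomp := CA.indep.comp
      (Sum.map id (![(⟨α, hαC, hα0, hα1⟩ : {γ : ι → ZMod 2 // γ ∈ C ∧ γ ≠ 0 ∧ γ ≠ 1}),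
         ⟨β, hβC, hβ0, hβ1⟩, ⟨α + β, habC, hab0, hnc⟩]))
      (Function.Injective.sumMap Function.injective_id hg3)
    convert hcomp using 1
    funext z
    cases z with
    | inl i => rfl
    | inr j => fin_cases j <;> rfl
  -- linear independence of x, y, x*y
  have hw : LinearIndependent F ![x, y, x * y] := by
    rw [Fintype.linearIndependent_iff]
    intro g hg
    have hsum : ∑ z, (Sum.elim
        (fun i => (if α i = 1 then g 0 * lam else 0) + (if β i = 1 then g 1 * lam else 0)
          + (if α i = 1 ∧ β i = 1 then g 2 * lam ^ 2 else 0))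
        (![g 0 * mua + g 2 * (lam * a0 * k * mua),
           g 1 * mub + g 2 * (lam * a0 * k * mub),
           g 2 * (mua * mub * CA.pb α β)]) z) •
        (Sum.elim CA.t ![CA.e α, CA.e β, CA.e (α + β)] z) = 0 := by
      rw [Fintype.sum_sum_type]
      have hL : ∑ i : ι, (Sum.elim
          (fun i => (if α i = 1 then g 0 * lam else 0) + (if β i = 1 then g 1 * lam else 0)
            + (if α i = 1 ∧ β i = 1 then g 2 * lam ^ 2 else 0))
          (![g 0 * mua + g 2 * (lam * a0 * k * mua),
             g 1 * mub + g 2 * (lam * a0 * k * mub),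
             g 2 * (mua * mub * CA.pb α β)]) (Sum.inl i)) •
          (Sum.elim CA.t ![CA.e α, CA.e β, CA.e (α + β)] (Sum.inl i)) =
          (g 0 * lam) • (∑ i ∈ univ.filter fun i => α i = 1, CA.t i)
          + (g 1 * lam) • (∑ i ∈ univ.filter fun i => β i = 1, CA.t i)
          + (g 2 * lam ^ 2) • (∑ i ∈ univ.filter fun i => α i = 1 ∧ β i = 1, CA.t i) := by
        rw [smul_sum, smul_sum, smul_sum, sum_filter, sum_filter, sum_filter,
          ← sum_add_distrib, ← sum_add_distrib]
        refine Finset.sum_congr rfl fun i _ => ?_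
        simp only [Sum.elim_inl, add_smul, ite_smul, zero_smul]
      rw [hL, Fin.sum_univ_three]
      simp only [Sum.elim_inr, Matrix.cons_val_zero, Matrix.cons_val_one, Matrix.head_cons,
        Matrix.cons_val_two, Matrix.tail_cons]
      have hg' : g 0 • x + g 1 • y + g 2 • (x * y) = 0 := by
        have := hg
        rw [Fin.sum_univ_three] at this
        simpa using this
      rw [key, hxdef, hydef] at hg'
      rw [← hg']
      module
    have hzero := Fintype.linearIndependent_iff.mp hv' _ hsum
    have h2 : g 2 = 0 := by
      have := hzero (Sum.inr 2)
      simp only [Sum.elim_inr, Matrix.cons_val_two, Matrix.tail_cons, Matrix.head_cons] at this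
      rcases mul_eq_zero.mp this with h | h
      · exact h
      · exact absurd h (mul_ne_zero (mul_ne_zero hmua hmub) hb)
    have h0 : g 0 = 0 := by
      have := hzero (Sum.inr 0)
      simp only [Sum.elim_inr, Matrix.cons_val_zero, h2, zero_mul, add_zero] at this
      exact (mul_eq_zero.mp this).resolve_right hmua
    have h1 : g 1 = 0 := by
      have := hzero (Sum.inr 1)
      simp only [Sum.elim_inr, Matrix.cons_val_one, Matrix.head_cons, h2, zero_mul,
        add_zero] at this
      exact (mul_eq_zero.mp this).resolve_right hmub
    intro j
    fin_cases j <;> assumption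
  -- transfer to the subalgebra
  have hmem : ∀ j : Fin 3, (![x, y, x * y] j) ∈ S := by
    intro j
    fin_cases j <;> assumption
  have hW : LinearIndependent F (fun j : Fin 3 => (⟨![x, y, x * y] j, hmem j⟩ : S)) := by
    apply LinearIndependent.of_comp (SMulMemClass.subtype S)
    convert hw using 1
    funext j
    rfl
  have hle := hW.cardinal_lift_le_rank
  simp only [Cardinal.mk_fin, Cardinal.lift_natCast, Cardinal.lift_uzero] at hle
  refine lt_of_lt_of_le ?_ hle
  norm_num
end

section
/- In the code algebra for C = F₂² with a = −1 (so λ = −1/2), and μᵢ² = −3/(4c_{αᵢ}) with c_{αᵢ} ≠ 0, each subalgebra Aᵢ = ⟨tᵢ, e^{αᵢ}⟩ contains exactly three nonzero idempotents: tᵢ and the two small idempotents e_{i,±} = −(1/2)tᵢ ± μᵢe^{αᵢ}; moreover the Miyamoto involution τ_{i,±} (fixing e_{i,±}, negating 2μᵢc_{αᵢ}tᵢ − e^{αᵢ}) maps tᵢ to e_{i,∓}. -/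
/-- The weight-one vector with support `{i}`. -/
def sngl {ι : Type*} [DecidableEq ι] (i : ι) : ι → ZMod 2 :=
  fun j => if j = i then 1 else 0

/-- In the code algebra for `C = F₂²` with `a = −1` (so `λ = −1/2`) and
`μᵢ² = −3/(4c_{αᵢ})`, each subalgebra `Aᵢ = ⟨tᵢ, e^{αᵢ}⟩` contains exactly three
nonzero idempotents, namely `tᵢ` and `e_{i,±} = −(1/2)tᵢ ± μᵢ e^{αᵢ}`, and the
Miyamoto involution `τ_{i,±}` (fixing `e_{i,±}`, negating `2μᵢc_{αᵢ}tᵢ − e^{αᵢ}`)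
maps `tᵢ` to `e_{i,∓}`. -/
theorem small_idempotents_F2_squared
    (F : Type*) [Field F] (h2 : (2 : F) ≠ 0) (h3 : (3 : F) ≠ 0)
    (A : Type*) [NonUnitalNonAssocCommRing A] [Module F A]
    [SMulCommClass F A A] [IsScalarTower F A A]
    (CA : CodeAlgebra F (Fin 2) (⊤ : Submodule (ZMod 2) (Fin 2 → ZMod 2)) A)
    (ha : ∀ i : Fin 2, CA.pa i (sngl i) = -1)
    (c μ : Fin 2 → F)
    (hc : ∀ i, ∀ j, sngl i j = 1 → CA.pc j (sngl i) = c i)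
    (hc0 : ∀ i, c i ≠ 0)
    (hμ : ∀ i, (μ i) ^ 2 = -3 / (4 * c i)) :
    ∀ i : Fin 2,
      (CA.t i ≠ 0 ∧ CA.t i * CA.t i = CA.t i ∧
        CA.t i ∈ Submodule.span F ({CA.t i, CA.e (sngl i)} : Set A)) ∧
      ((-(1/2 : F)) • CA.t i + μ i • CA.e (sngl i) ≠ 0 ∧
        ((-(1/2 : F)) • CA.t i + μ i • CA.e (sngl i)) *
          ((-(1/2 : F)) • CA.t i + μ i • CA.e (sngl i)) =
          (-(1/2 : F)) • CA.t i + μ i • CA.e (sngl i) ∧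
        (-(1/2 : F)) • CA.t i + μ i • CA.e (sngl i) ∈
          Submodule.span F ({CA.t i, CA.e (sngl i)} : Set A)) ∧
      ((-(1/2 : F)) • CA.t i - μ i • CA.e (sngl i) ≠ 0 ∧
        ((-(1/2 : F)) • CA.t i - μ i • CA.e (sngl i)) *
          ((-(1/2 : F)) • CA.t i - μ i • CA.e (sngl i)) =
          (-(1/2 : F)) • CA.t i - μ i • CA.e (sngl i) ∧
        (-(1/2 : F)) • CA.t i - μ i • CA.e (sngl i) ∈
          Submodule.span F ({CA.t i, CA.e (sngl i)} : Set A)) ∧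
      (∀ x ∈ Submodule.span F ({CA.t i, CA.e (sngl i)} : Set A),
        x * x = x → x ≠ 0 →
        x = CA.t i ∨ x = (-(1/2 : F)) • CA.t i + μ i • CA.e (sngl i) ∨
          x = (-(1/2 : F)) • CA.t i - μ i • CA.e (sngl i)) ∧
      (∀ τ : A →ₗ[F] A,
        τ ((-(1/2 : F)) • CA.t i + μ i • CA.e (sngl i)) =
          (-(1/2 : F)) • CA.t i + μ i • CA.e (sngl i) →
        τ ((2 * μ i * c i) • CA.t i - CA.e (sngl i)) =
          -((2 * μ i * c i) • CA.t i - CA.e (sngl i)) →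
        τ (CA.t i) = (-(1/2 : F)) • CA.t i - μ i • CA.e (sngl i)) ∧
      (∀ τ : A →ₗ[F] A,
        τ ((-(1/2 : F)) • CA.t i - μ i • CA.e (sngl i)) =
          (-(1/2 : F)) • CA.t i - μ i • CA.e (sngl i) →
        τ ((2 * (-μ i) * c i) • CA.t i - CA.e (sngl i)) =
          -((2 * (-μ i) * c i) • CA.t i - CA.e (sngl i)) →
        τ (CA.t i) = (-(1/2 : F)) • CA.t i + μ i • CA.e (sngl i)) := by
  intro i
  have h0 : (sngl i : Fin 2 → ZMod 2) ≠ 0 := by fin_cases i <;> decide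
  have h1 : (sngl i : Fin 2 → ZMod 2) ≠ 1 := by fin_cases i <;> decide
  have hii : sngl i i = 1 := by simp [sngl]
  set t := CA.t i with ht_def
  set e := CA.e (sngl i) with he_def
  have htt : t * t = t := by rw [ht_def, CA.mul_tt, if_pos rfl]
  have hte : t * e = (-1 : F) • e := by
    rw [ht_def, he_def, CA.mul_te i _ trivial h0 h1, if_pos hii, ha]
  have hee : e * e = c i • t := by
    rw [he_def, CA.mul_ee_self _ trivial h0 h1]
    have hfilt : (Finset.univ.filter (fun j => sngl i j = 1)) = {i} := by
      fin_cases i <;> decide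
    rw [hfilt, Finset.sum_singleton, hc i i hii, ht_def]
  -- linear independence of t and e
  have hpair : ∀ a b : F, a • t + b • e = 0 → a = 0 ∧ b = 0 := by
    have hβ : sngl i ∈ (⊤ : Submodule (ZMod 2) (Fin 2 → ZMod 2)) ∧
        sngl i ≠ 0 ∧ sngl i ≠ 1 := ⟨trivial, h0, h1⟩
    have hcomp := CA.indep.comp
      (fun j : Fin 2 => if j = 0 then Sum.inl i else Sum.inr ⟨sngl i, hβ⟩)
      (by intro x y hxy; fin_cases x <;> fin_cases y <;> simp_all)
    have heq : (Sum.elim CA.t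
        (fun β : {β : Fin 2 → ZMod 2 // β ∈ (⊤ : Submodule (ZMod 2) (Fin 2 → ZMod 2)) ∧
          β ≠ 0 ∧ β ≠ 1} => CA.e β.1)) ∘
        (fun j : Fin 2 => if j = 0 then Sum.inl i else Sum.inr ⟨sngl i, hβ⟩) = ![t, e] := by
      funext j; fin_cases j <;> simp [ht_def, he_def]
    rw [heq] at hcomp
    exact LinearIndependent.pair_iff.mp hcomp
  have ht0 : t ≠ 0 := by
    intro h
    have := hpair 1 0 (by rw [h]; simp)
    exact one_ne_zero this.1
  have hμ0 : μ i ≠ 0 := by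
    intro h
    have : (-3 : F) / (4 * c i) = 0 := by rw [← hμ i, h]; ring
    have h4 : (4 : F) * c i ≠ 0 := by
      have : (4 : F) = 2 * 2 := by norm_num
      exact mul_ne_zero (by rw [this]; exact mul_ne_zero h2 h2) (hc0 i)
    rw [div_eq_zero_iff] at this
    rcases this with h' | h'
    · exact h3 (by linear_combination -h')
    · exact h4 h'
  have h4 : (4 : F) ≠ 0 := by
    have h44 : (4 : F) = 2 * 2 := by norm_num
    rw [h44]; exact mul_ne_zero h2 h2
  have hci : c i ≠ 0 := hc0 i
  have hμ4 : 4 * ((μ i) ^ 2 * c i) = -3 := by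
    rw [hμ i]; field_simp
  have hspan : ∀ a b : F, a • t + b • e ∈ Submodule.span F ({t, e} : Set A) :=
    fun a b => Submodule.add_mem _
      (Submodule.smul_mem _ a (Submodule.subset_span (by simp)))
      (Submodule.smul_mem _ b (Submodule.subset_span (by simp)))
  -- key multiplication formula
  have hmul : ∀ a b : F, (a • t + b • e) * (a • t + b • e)
      = (a ^ 2 + b ^ 2 * c i) • t + (-(2 * a * b)) • e := by
    intro a b
    rw [add_mul, mul_add, mul_add, smul_mul_assoc, smul_mul_assoc, smul_mul_assoc,
      smul_mul_assoc, mul_smul_comm, mul_smul_comm, mul_smul_comm, mul_smul_comm,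
      htt, hte, hee, mul_comm e t, hte]
    match_scalars <;> ring
  have hne : ∀ b : F, (-(1/2 : F)) • t + b • e ≠ 0 := by
    intro b h
    have := hpair _ _ h
    exact (neg_ne_zero.mpr (div_ne_zero one_ne_zero h2)) this.1
  have hidem : ∀ b : F, b ^ 2 = (μ i) ^ 2 →
      ((-(1/2 : F)) • t + b • e) * ((-(1/2 : F)) • t + b • e)
        = (-(1/2 : F)) • t + b • e := by
    intro b hb
    rw [hmul]
    have hb4 : 4 * (b ^ 2 * c i) = -3 := by rw [hb]; exact hμ4
    match_scalars
    · field_simp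
      linear_combination hb4
    · field_simp
  refine ⟨⟨ht0, htt, Submodule.subset_span (by simp)⟩, ?_, ?_, ?_, ?_, ?_⟩
  · exact ⟨hne (μ i), hidem (μ i) rfl, hspan _ _⟩
  · have heq : (-(1/2 : F)) • t + (-(μ i)) • e = (-(1/2 : F)) • t - μ i • e := by
      module
    refine ⟨?_, ?_, ?_⟩
    · have h := hne (-(μ i))
      rwa [heq] at h
    · have h := hidem (-(μ i)) (by ring)
      rwa [heq] at h
    · have h := hspan (-(1/2 : F)) (-(μ i))
      rwa [heq] at h
  · -- uniqueness
    intro x hx hxx hx0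
    obtain ⟨a, b, rfl⟩ := Submodule.mem_span_pair.mp hx
    rw [hmul] at hxx
    have hcoef : ((a ^ 2 + b ^ 2 * c i) - a) • t + ((-(2 * a * b)) - b) • e = 0 := by
      rw [sub_smul, sub_smul, sub_add_sub_comm, hxx, sub_self]
    obtain ⟨hA, hB⟩ := hpair _ _ hcoef
    have hB' : b * (2 * a + 1) = 0 := by linear_combination -hB
    rcases mul_eq_zero.mp hB' with hb0 | ha'
    · subst hb0
      have ha2 : a * (a - 1) = 0 := by linear_combination hA
      rcases mul_eq_zero.mp ha2 with h' | h'
      · exfalso; apply hx0; rw [h']; simp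
      · left
        have : a = 1 := by linear_combination h'
        rw [this]; simp
    · have ha : a = -(1/2 : F) := by
        apply mul_left_cancel₀ h2
        have h21 : (2 : F) * -(1/2) = -1 := by field_simp
        rw [h21]
        linear_combination ha'
      subst ha
      have hb4 : 4 * (b ^ 2 * c i) = -3 := by
        field_simp at hA
        exact mul_left_cancel₀ h2 (by linear_combination 2 * hA)
      have hb2 : b ^ 2 = (μ i) ^ 2 :=
        mul_right_cancel₀ (hc0 i) (mul_left_cancel₀ h4 (by rw [hb4, hμ4]))
      have : (b - μ i) * (b + μ i) = 0 := by linear_combination hb2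
      rcases mul_eq_zero.mp this with h' | h'
      · right; left
        have : b = μ i := by linear_combination h'
        rw [this]
      · right; right
        have : b = -(μ i) := by linear_combination h'
        rw [this]
        module
  · -- Miyamoto τ_{i,+}
    intro τ hu hv
    have hdecomp : t = (-(1/2 : F)) • ((-(1/2 : F)) • t + μ i • e)
        + (-(μ i / 2)) • ((2 * μ i * c i) • t - e) := by
      match_scalars
      · field_simp
        linear_combination hμ4
      · field_simp
        ring
    rw [hdecomp, map_add, map_smul, map_smul, hu, hv]
    match_scalars
    · field_simp
      linear_combination hμ4
    · field_simp
      ring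
  · -- Miyamoto τ_{i,-}
    intro τ hu hv
    have hdecomp : t = (-(1/2 : F)) • ((-(1/2 : F)) • t - μ i • e)
        + (-((-(μ i)) / 2)) • ((2 * (-(μ i)) * c i) • t - e) := by
      match_scalars
      · field_simp
        linear_combination hμ4
      · field_simp
        ring
    rw [hdecomp, map_add, map_smul, map_smul, hu, hv]
    match_scalars
    · field_simp
      linear_combination hμ4
    · field_simp
      ring
end

section
/- Let C = ⊕ᵢ₌₁ʳ Cᵢ with each Cᵢ the even-weight code of length m ≥ 3, n = rm ≥ 5. For each weight-2 codeword α with supp(α) = {i, j}, let σ_α be the linear map on the code algebra basis given by: tᵢ ↔ tⱼ, t_k ↦ t_k for k ∉ supp(α), e^β ↦ e^β if |α ∩ β| = 0 or 2, and e^β ↦ e^{α+β} if |α ∩ β| = 1. Then the group generated by all such σ_α (α ranging over weight-2 codewords of C) is isomorphic to the direct product of r copies of S_m. -/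
/-- The direct sum of `r` copies of the full even-weight code of length `m`. -/
def evenSumCode (r m : ℕ) : Submodule (ZMod 2) (Fin r × Fin m → ZMod 2) where
  carrier := {v | ∀ i, ∑ j, v (i, j) = 0}
  add_mem' := by
    intro a b ha hb i
    simp [Finset.sum_add_distrib, ha i, hb i]
  zero_mem' := by intro i; simp
  smul_mem' := by
    intro cc x hx i
    simp only [Pi.smul_apply, smul_eq_mul, ← Finset.mul_sum, hx i, mul_zero]

/-- The weight-two vector supported at `(i,j)` and `(i,k)` (for `j ≠ k`). -/
def pairVec {r m : ℕ} (i : Fin r) (j k : Fin m) : Fin r × Fin m → ZMod 2 :=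
  fun p => if p = (i, j) ∨ p = (i, k) then 1 else 0

open Finset in
/-- For `C = ⊕ᵢ₌₁ʳ Cᵢ` a direct sum of even-weight codes of length `m ≥ 3` with
`n = rm ≥ 5`, the automorphisms `σ_α` of the code algebra attached to the weight-2
codewords `α` (swapping the two toral elements in `supp(α)` and mapping
`e^β ↦ e^{α+β}` when `|α ∩ β| = 1`, fixing everything else) generate a group
isomorphic to the direct product of `r` copies of `S_m`. -/
theorem miyamoto_extra_automorphisms_Sm
    (F : Type*) [Field F] (h2 : (2 : F) ≠ 0)
    (A : Type*) [NonUnitalNonAssocCommRing A] [Module F A]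
    [SMulCommClass F A A] [IsScalarTower F A A]
    (r m : ℕ) (hm : 3 ≤ m) (hn : 5 ≤ r * m)
    (CA : CodeAlgebra F (Fin r × Fin m) (evenSumCode r m) A)
    (σ : Fin r → Fin m → Fin m → (A ≃ₗ[F] A))
    (hσt_swap : ∀ i j k, j ≠ k →
      σ i j k (CA.t (i, j)) = CA.t (i, k) ∧ σ i j k (CA.t (i, k)) = CA.t (i, j))
    (hσt_fix : ∀ i j k, j ≠ k → ∀ p : Fin r × Fin m, p ≠ (i, j) → p ≠ (i, k) →
      σ i j k (CA.t p) = CA.t p)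
    (hσe_move : ∀ i j k, j ≠ k → ∀ β, β ∈ evenSumCode r m → β ≠ 0 → β ≠ 1 →
      (univ.filter fun p => pairVec i j k p = 1 ∧ β p = 1).card = 1 →
      σ i j k (CA.e β) = CA.e (pairVec i j k + β))
    (hσe_fix : ∀ i j k, j ≠ k → ∀ β, β ∈ evenSumCode r m → β ≠ 0 → β ≠ 1 →
      (univ.filter fun p => pairVec i j k p = 1 ∧ β p = 1).card ≠ 1 →
      σ i j k (CA.e β) = CA.e β) :
    Nonempty
      (↥(Subgroup.closure {g : A ≃ₗ[F] A | ∃ i j k, j ≠ k ∧ g = σ i j k}) ≃*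
        (Fin r → Equiv.Perm (Fin m))) := by

  classical
  have hz2 : ∀ x : ZMod 2, x = 0 ∨ x = 1 := by decide
  have ρ_mul : ∀ (π π' : Fin r → Equiv.Perm (Fin m)) (p : Fin r × Fin m),
      Equiv.prodCongrRight (π * π') p = Equiv.prodCongrRight π (Equiv.prodCongrRight π' p) :=
    fun _ _ _ => rfl
  have ρ_one : ∀ p : Fin r × Fin m,
      Equiv.prodCongrRight (1 : Fin r → Equiv.Perm (Fin m)) p = p := fun _ => rfl
  have ρ_apply : ∀ (π : Fin r → Equiv.Perm (Fin m)) (p : Fin r × Fin m),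
      Equiv.prodCongrRight π p = (p.1, π p.1 p.2) := fun _ _ => rfl
  have hmul_apply : ∀ (g h : A ≃ₗ[F] A) (x : A), (g * h) x = g (h x) := fun _ _ _ => rfl
  have hone_apply : ∀ x : A, (1 : A ≃ₗ[F] A) x = x := fun _ => rfl
  have hinv_apply : ∀ (g : A ≃ₗ[F] A) (x : A), g⁻¹ (g x) = x := fun g x => g.symm_apply_apply x
  have hmem : ∀ v : Fin r × Fin m → ZMod 2, v ∈ evenSumCode r m ↔ ∀ i, ∑ j, v (i, j) = 0 :=
    fun v => Iff.rfl
  -- stability of C* under block permutations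
  have hCstar : ∀ (π : Fin r → Equiv.Perm (Fin m)) (β : Fin r × Fin m → ZMod 2),
      β ∈ evenSumCode r m → β ≠ 0 → β ≠ 1 →
      ((fun p => β (Equiv.prodCongrRight π p)) ∈ evenSumCode r m ∧
       (fun p => β (Equiv.prodCongrRight π p)) ≠ 0 ∧
       (fun p => β (Equiv.prodCongrRight π p)) ≠ 1) := by
    intro π β hβ h0 h1
    refine ⟨(hmem _).2 fun i => ?_, fun h => h0 (funext fun p => ?_), fun h => h1 (funext fun p => ?_)⟩
    · calc ∑ j, β (Equiv.prodCongrRight π (i, j)) = ∑ j, β (i, π i j) := rfl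
        _ = ∑ j, β (i, j) := Equiv.sum_comp (π i) (fun j => β (i, j))
        _ = 0 := (hmem β).1 hβ i
    · have := congrFun h ((Equiv.prodCongrRight π).symm p)
      simp only [Equiv.apply_symm_apply] at this
      simpa using this
    · have := congrFun h ((Equiv.prodCongrRight π).symm p)
      simp only [Equiv.apply_symm_apply] at this
      simpa using this
  -- injectivity of t
  have ht_indep : LinearIndependent F CA.t := by
    simpa using CA.indep.comp Sum.inl Sum.inl_injective
  have ht_inj : Function.Injective CA.t := ht_indep.injective
  -- the "graph" subgroup
  let K' : Subgroup ((A ≃ₗ[F] A) × (Fin r → Equiv.Perm (Fin m))) :=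
    { carrier := {gp | (∀ p, gp.1 (CA.t p) = CA.t (Equiv.prodCongrRight gp.2 p)) ∧
        ∀ β : Fin r × Fin m → ZMod 2, β ∈ evenSumCode r m → β ≠ 0 → β ≠ 1 →
          gp.1 (CA.e β) = CA.e (fun p => β (Equiv.prodCongrRight gp.2⁻¹ p))}
      one_mem' := ⟨fun p => rfl, fun β hβ h0 h1 => rfl⟩
      mul_mem' := by
        rintro a b ⟨hat, hae⟩ ⟨hbt, hbe⟩
        constructor
        · intro p
          calc (a * b).1 (CA.t p) = a.1 (b.1 (CA.t p)) := hmul_apply _ _ _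
            _ = a.1 (CA.t (Equiv.prodCongrRight b.2 p)) := by rw [hbt]
            _ = CA.t (Equiv.prodCongrRight a.2 (Equiv.prodCongrRight b.2 p)) := hat _
            _ = CA.t (Equiv.prodCongrRight (a * b).2 p) := rfl
        · intro β hβ h0 h1
          obtain ⟨hβ', h0', h1'⟩ := hCstar b.2⁻¹ β hβ h0 h1
          calc (a * b).1 (CA.e β) = a.1 (b.1 (CA.e β)) := hmul_apply _ _ _
            _ = a.1 (CA.e (fun p => β (Equiv.prodCongrRight b.2⁻¹ p))) := by rw [hbe β hβ h0 h1]
            _ = CA.e (fun p => β (Equiv.prodCongrRight b.2⁻¹ (Equiv.prodCongrRight a.2⁻¹ p))) :=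
              hae _ hβ' h0' h1'
            _ = CA.e (fun p => β (Equiv.prodCongrRight (a * b).2⁻¹ p)) := by
              congr 1
      inv_mem' := by
        rintro a ⟨hat, hae⟩
        constructor
        · intro p
          have h1 : a.1 (CA.t (Equiv.prodCongrRight a.2⁻¹ p)) = CA.t p := by
            rw [hat, ← ρ_mul, mul_inv_cancel, ρ_one]
          show (a.1)⁻¹ (CA.t p) = CA.t (Equiv.prodCongrRight a.2⁻¹ p)
          rw [← h1]
          exact hinv_apply _ _
        · intro β hβ h0 h1
          obtain ⟨hβ', h0', h1'⟩ := hCstar a.2 β hβ h0 h1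
          have key : a.1 (CA.e (fun p => β (Equiv.prodCongrRight a.2 p))) = CA.e β := by
            rw [hae _ hβ' h0' h1']
            congr 1
            funext p
            rw [← ρ_mul, mul_inv_cancel, ρ_one]
          show (a.1)⁻¹ (CA.e β) = CA.e (fun p => β (Equiv.prodCongrRight (a.2⁻¹)⁻¹ p))
          rw [inv_inv, ← key]
          exact hinv_apply _ _ }
  -- the generating set and its closure
  let δ : Fin r → Fin m → Fin m → (Fin r → Equiv.Perm (Fin m)) :=
    fun i j k => Pi.mulSingle i (Equiv.swap j k)
  let S : Set ((A ≃ₗ[F] A) × (Fin r → Equiv.Perm (Fin m))) :=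
    {gp | ∃ i j k, j ≠ k ∧ gp = (σ i j k, δ i j k)}
  let K : Subgroup ((A ≃ₗ[F] A) × (Fin r → Equiv.Perm (Fin m))) := Subgroup.closure S
  -- generators lie in K'
  have hSK' : S ⊆ (K' : Set _) := by
    rintro gp ⟨i, j, k, hjk, rfl⟩
    have hδinv : (δ i j k)⁻¹ = δ i j k := by
      funext i'
      show ((δ i j k) i')⁻¹ = (δ i j k) i'
      by_cases h : i' = i
      · simp [δ, h, Equiv.swap_inv]
      · simp [δ, Pi.mulSingle_eq_of_ne h]
    have hδapp : ∀ (i' : Fin r) (j' : Fin m),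
        Equiv.prodCongrRight (δ i j k) (i', j') =
          (i', if i' = i then Equiv.swap j k j' else j') := by
      intro i' j'
      rw [ρ_apply]
      by_cases h : i' = i
      · simp [δ, h]
      · simp [δ, h, Pi.mulSingle_eq_of_ne h]
    constructor
    · -- action on toral elements
      rintro ⟨i', j'⟩
      rcases eq_or_ne i i' with rfl | h
      · rcases eq_or_ne j j' with rfl | hj
        · rw [hδapp, if_pos rfl, Equiv.swap_apply_left]
          exact (hσt_swap i j k hjk).1
        · rcases eq_or_ne k j' with rfl | hk
          · rw [hδapp, if_pos rfl, Equiv.swap_apply_right]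
            exact (hσt_swap i j k hjk).2
          · rw [hδapp, if_pos rfl, Equiv.swap_apply_of_ne_of_ne hj.symm hk.symm]
            exact hσt_fix i j k hjk (i, j') (by simp [Prod.ext_iff, hj.symm])
              (by simp [Prod.ext_iff, hk.symm])
      · rw [hδapp, if_neg (Ne.symm h)]
        exact hσt_fix i j k hjk (i', j') (by simp [Prod.ext_iff, h.symm])
          (by simp [Prod.ext_iff, h.symm])
    · -- action on codeword elements
      intro β hβ h0 h1
      have hijk : ((i : Fin r), (j : Fin m)) ≠ (i, k) := by simp [Prod.ext_iff, hjk]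
      have hfilter : (univ.filter fun p => pairVec i j k p = 1 ∧ β p = 1) =
          ({(i, j), (i, k)} : Finset (Fin r × Fin m)).filter (fun p => β p = 1) := by
        ext p
        simp only [Finset.mem_filter, Finset.mem_univ, true_and, Finset.mem_insert,
          Finset.mem_singleton]
        constructor
        · rintro ⟨hpv, hb⟩
          refine ⟨?_, hb⟩
          by_contra hc
          push_neg at hc
          rw [show pairVec i j k p = 0 from by simp [pairVec, hc.1, hc.2]] at hpv
          exact absurd hpv (by decide)
        · rintro ⟨hp, hb⟩
          exact ⟨by simp [pairVec, hp], hb⟩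
      show (σ i j k) (CA.e β) = CA.e fun p => β (Equiv.prodCongrRight (δ i j k)⁻¹ p)
      rw [hδinv]
      by_cases hab : β (i, j) = β (i, k)
      · -- σ fixes e β, and β is invariant
        have hcard : (univ.filter fun p => pairVec i j k p = 1 ∧ β p = 1).card ≠ 1 := by
          rw [hfilter]
          by_cases hbj : β (i, j) = 1
          · rw [Finset.filter_insert, if_pos hbj, Finset.filter_singleton,
              if_pos (hab.symm.trans hbj), Finset.card_insert_of_notMem (by simp [hijk])]
            simp
          · rw [Finset.filter_insert, if_neg hbj, Finset.filter_singleton,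
              if_neg (fun hc => hbj (hab.trans hc))]
            simp
        rw [hσe_fix i j k hjk β hβ h0 h1 hcard]
        congr 1
        funext p
        obtain ⟨i', j'⟩ := p
        rw [hδapp]
        rcases eq_or_ne i i' with rfl | h
        · rw [if_pos rfl]
          rcases eq_or_ne j j' with rfl | hj
          · rw [Equiv.swap_apply_left]; exact hab
          · rcases eq_or_ne k j' with rfl | hk
            · rw [Equiv.swap_apply_right]; exact hab.symm
            · rw [Equiv.swap_apply_of_ne_of_ne hj.symm hk.symm]
        · rw [if_neg (Ne.symm h)]
      · -- σ moves e β
        have hcard : (univ.filter fun p => pairVec i j k p = 1 ∧ β p = 1).card = 1 := by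
          rw [hfilter]
          rcases hz2 (β (i, j)) with hbj | hbj <;> rcases hz2 (β (i, k)) with hbk | hbk
          · exact absurd (hbj.trans hbk.symm) hab
          · rw [Finset.filter_insert, if_neg (by rw [hbj]; decide), Finset.filter_singleton,
              if_pos hbk, Finset.card_singleton]
          · rw [Finset.filter_insert, if_pos hbj, Finset.filter_singleton,
              if_neg (by rw [hbk]; decide), Finset.card_insert_of_notMem (by simp),
              Finset.card_empty]
          · exact absurd (hbj.trans hbk.symm) hab
        rw [hσe_move i j k hjk β hβ h0 h1 hcard]
        congr 1
        funext p
        obtain ⟨i', j'⟩ := p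
        show pairVec i j k (i', j') + β (i', j') = β (Equiv.prodCongrRight (δ i j k) (i', j'))
        rw [hδapp]
        rcases eq_or_ne i i' with rfl | h
        · rw [if_pos rfl]
          rcases eq_or_ne j j' with rfl | hj
          · rw [Equiv.swap_apply_left, show pairVec i j k (i, j) = 1 from by simp [pairVec]]
            rcases hz2 (β (i, j)) with hbj | hbj <;> rcases hz2 (β (i, k)) with hbk | hbk
            · exact absurd (hbj.trans hbk.symm) hab
            · rw [hbj, hbk]; decide
            · rw [hbj, hbk]; decide
            · exact absurd (hbj.trans hbk.symm) hab
          · rcases eq_or_ne k j' with rfl | hk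
            · rw [Equiv.swap_apply_right, show pairVec i j k (i, k) = 1 from by simp [pairVec]]
              rcases hz2 (β (i, j)) with hbj | hbj <;> rcases hz2 (β (i, k)) with hbk | hbk
              · exact absurd (hbj.trans hbk.symm) hab
              · rw [hbj, hbk]; decide
              · rw [hbj, hbk]; decide
              · exact absurd (hbj.trans hbk.symm) hab
            · rw [Equiv.swap_apply_of_ne_of_ne hj.symm hk.symm,
                show pairVec i j k (i, j') = 0 from by
                  simp [pairVec, Prod.ext_iff, hj.symm, hk.symm], zero_add]
        · rw [if_neg (Ne.symm h),
            show pairVec i j k (i', j') = 0 from by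
              simp [pairVec, Prod.ext_iff, h.symm], zero_add]
  have hKK' : K ≤ K' := (Subgroup.closure_le K').2 hSK'
  -- the two projections
  let φ1 : K →* (A ≃ₗ[F] A) := (MonoidHom.fst _ _).comp K.subtype
  let φ2 : K →* (Fin r → Equiv.Perm (Fin m)) := (MonoidHom.snd _ _).comp K.subtype
  have inj1 : Function.Injective φ1 := by
    rintro ⟨xv, hx⟩ ⟨yv, hy⟩ hxy
    obtain ⟨hwt, -⟩ := hKK' (mul_mem hx (inv_mem hy))
    have hx1 : xv.1 = yv.1 := hxy
    have h1 : (xv * yv⁻¹).1 = 1 := by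
      show xv.1 * (yv.1)⁻¹ = 1
      rw [hx1, mul_inv_cancel]
    have h2 : (xv * yv⁻¹).2 = 1 := by
      funext i'
      apply Equiv.ext
      intro b
      have h3 := hwt (i', b)
      rw [h1, hone_apply, ρ_apply] at h3
      exact (Prod.ext_iff.1 (ht_inj h3)).2.symm
    exact Subtype.ext (mul_inv_eq_one.1 (Prod.ext h1 h2))
  have inj2 : Function.Injective φ2 := by
    rintro ⟨xv, hx⟩ ⟨yv, hy⟩ hxy
    obtain ⟨hwt, hwe⟩ := hKK' (mul_mem hx (inv_mem hy))
    have hx2 : xv.2 = yv.2 := hxy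
    have h2 : (xv * yv⁻¹).2 = 1 := by
      show xv.2 * (yv.2)⁻¹ = 1
      rw [hx2, mul_inv_cancel]
    have h1 : (xv * yv⁻¹).1 = 1 := by
      refine LinearEquiv.toLinearMap_injective (LinearMap.ext_on CA.span_top fun z hz => ?_)
      show (xv * yv⁻¹).1 z = (1 : A ≃ₗ[F] A) z
      revert z
      rintro z (⟨p, rfl⟩ | ⟨β, hβ, rfl⟩)
      · rw [hone_apply, hwt p, h2, ρ_one]
      · rw [hone_apply, hwe β hβ.1 hβ.2.1 hβ.2.2, h2, inv_one]
        exact rfl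
    exact Subtype.ext (mul_inv_eq_one.1 (Prod.ext h1 h2))
  -- surjectivity of the second projection
  have hsingle : ∀ (i : Fin r) (τ : Equiv.Perm (Fin m)),
      Pi.mulSingle i τ ∈ Subgroup.closure ((MonoidHom.snd _ _) '' S) := by
    intro i τ
    have hτ : τ ∈ Subgroup.closure {s : Equiv.Perm (Fin m) | s.IsSwap} := by
      rw [Equiv.Perm.closure_isSwap]; trivial
    have hle : Subgroup.closure {s : Equiv.Perm (Fin m) | s.IsSwap} ≤
        (Subgroup.closure ((MonoidHom.snd _ _) '' S)).comap
          (MonoidHom.mulSingle (fun _ : Fin r => Equiv.Perm (Fin m)) i) := by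
      rw [Subgroup.closure_le]
      rintro s ⟨x, y, hxy, rfl⟩
      exact Subgroup.subset_closure ⟨(σ i x y, δ i x y), ⟨i, x, y, hxy, rfl⟩, rfl⟩
    exact Subgroup.mem_comap.1 (hle hτ)
  have key : ∀ s : Finset (Fin r), ∀ π : Fin r → Equiv.Perm (Fin m),
      (∀ i ∉ s, π i = 1) → π ∈ Subgroup.closure ((MonoidHom.snd _ _) '' S) := by
    intro s
    induction s using Finset.induction_on with
    | empty =>
      intro π hπ
      have : π = 1 := funext fun i => hπ i (by simp)
      rw [this]; exact one_mem _
    | @insert a s ha ih =>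
      intro π hπ
      have h1 : π = Pi.mulSingle a (π a) * Function.update π a 1 := by
        funext i'
        rcases eq_or_ne i' a with rfl | h
        · rw [Pi.mul_apply, Pi.mulSingle_eq_same, Function.update_self, mul_one]
        · rw [Pi.mul_apply, Pi.mulSingle_eq_of_ne h, Function.update_of_ne h, one_mul]
      rw [h1]
      refine mul_mem (hsingle a (π a)) (ih _ fun i hi => ?_)
      rcases eq_or_ne i a with rfl | h
      · rw [Function.update_self]
      · rw [Function.update_of_ne h]
        exact hπ i (by simp [hi, h])
  have surj2 : Function.Surjective φ2 := by
    intro π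
    have hmap : Subgroup.map (MonoidHom.snd _ _) K = Subgroup.closure ((MonoidHom.snd _ _) '' S) :=
      MonoidHom.map_closure _ _
    have : π ∈ Subgroup.map (MonoidHom.snd (A ≃ₗ[F] A) _) K := by
      rw [hmap]; exact key Finset.univ π (by simp)
    obtain ⟨x, hx, hxeq⟩ := this
    exact ⟨⟨x, hx⟩, hxeq⟩
  -- assemble the isomorphism
  have hrange1 : φ1.range = Subgroup.closure {g : A ≃ₗ[F] A | ∃ i j k, j ≠ k ∧ g = σ i j k} := by
    have h1 : φ1.range = Subgroup.map (MonoidHom.fst _ _) K := by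
      ext g
      simp only [MonoidHom.mem_range, Subgroup.mem_map]
      constructor
      · rintro ⟨x, rfl⟩; exact ⟨↑x, x.2, rfl⟩
      · rintro ⟨x, hx, rfl⟩; exact ⟨⟨x, hx⟩, rfl⟩
    have h2 : (MonoidHom.fst (A ≃ₗ[F] A) (Fin r → Equiv.Perm (Fin m))) '' S =
        {g : A ≃ₗ[F] A | ∃ i j k, j ≠ k ∧ g = σ i j k} := by
      ext g
      constructor
      · rintro ⟨gp, ⟨i, j, k, hjk, rfl⟩, rfl⟩; exact ⟨i, j, k, hjk, rfl⟩
      · rintro ⟨i, j, k, hjk, rfl⟩; exact ⟨(σ i j k, δ i j k), ⟨i, j, k, hjk, rfl⟩, rfl⟩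
    rw [h1, MonoidHom.map_closure, h2]
  exact ⟨((MulEquiv.subgroupCongr hrange1.symm).trans
      (MonoidHom.ofInjective inj1).symm).trans (MulEquiv.ofBijective φ2 ⟨inj2, surj2⟩)⟩
end
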